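/- Let 0 < m ≤ L, let ρ ∈ (0, 1], let K ≥ 1 be a natural number, and let h₁, …, h_K be real numbers satisfying 0 ≤ h_j ≤ 1 for all j = 1, …, K and Σ_{j=1}^{K} ρ^{−2j} h_j ≤ 1. Let f : ℝⁿ → ℝ be differentiable, m-strongly convex, with L-Lipschitz continuous gradient, and with ∇f(0) = 0. Let y : ℕ → ℝⁿ be any sequence, set u_k = ∇f(y_k), and define q_k = u_k − L y_k for k ≥ 0 and q_k = 0 for k < 0. Then for every N ≥ 0, Σ_{k=0}^{N} ρ^{−2k} · 2⟨Σ_{j=1}^{K} h_j q_{k−j} + L y_k − u_k, u_k − m y_k⟩ ≥ 0. -/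

import Mathlib

open scoped RealInnerProductSpace


/-- Descent lemma: Lipschitz gradient gives quadratic upper bound. -/
lemma aux_descent {n : ℕ} (L : ℝ) (f : EuclideanSpace ℝ (Fin n) → ℝ)
    (f' : EuclideanSpace ℝ (Fin n) → EuclideanSpace ℝ (Fin n))
    (hdiff : ∀ x, HasGradientAt f (f' x) x)
    (hlip : ∀ x y, ‖f' y - f' x‖ ≤ L * ‖y - x‖) :
    ∀ x y, f y ≤ f x + ⟪f' x, y - x⟫ + L / 2 * ‖y - x‖ ^ 2 := by
  intro x y
  set d := y - x with hd
  have hline : ∀ t : ℝ, HasDerivAt (fun t : ℝ => f (x + t • d)) ⟪f' (x + t • d), d⟫ t := by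
    intro t
    have h1 : HasDerivAt (fun t : ℝ => x + t • d) d t := by
      simpa using ((hasDerivAt_id t).smul_const d).const_add x
    have h2 := ((hdiff (x + t • d)).hasFDerivAt).comp_hasDerivAt t h1
    simpa [InnerProductSpace.toDual_apply_apply, Function.comp_def] using h2
  set χ : ℝ → ℝ := fun t => f (x + t • d) - t * ⟪f' x, d⟫ - L / 2 * ‖d‖ ^ 2 * t ^ 2 with hχdef
  have hχ : ∀ t : ℝ, HasDerivAt χ (⟪f' (x + t • d), d⟫ - ⟪f' x, d⟫ - L * ‖d‖ ^ 2 * t) t := by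
    intro t
    have h3 : HasDerivAt (fun t : ℝ => t * ⟪f' x, d⟫) ⟪f' x, d⟫ t := hasDerivAt_mul_const _
    have h4 : HasDerivAt (fun t : ℝ => L / 2 * ‖d‖ ^ 2 * t ^ 2) (L / 2 * ‖d‖ ^ 2 * (2 * t)) t := by
      simpa using (hasDerivAt_pow 2 t).const_mul (L / 2 * ‖d‖ ^ 2)
    have := ((hline t).sub h3).sub h4
    refine this.congr_deriv ?_
    ring
  have hdiffχ : Differentiable ℝ χ := fun t => (hχ t).differentiableAt
  have hmono : AntitoneOn χ (Set.Icc (0:ℝ) 1) := by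
    apply antitoneOn_of_deriv_nonpos (convex_Icc 0 1) hdiffχ.continuous.continuousOn
      hdiffχ.differentiableOn
    intro t ht
    rw [interior_Icc] at ht
    rw [(hχ t).deriv]
    have h5 := hlip x (x + t • d)
    have h6 : ‖x + t • d - x‖ = t * ‖d‖ := by
      rw [add_sub_cancel_left, norm_smul, Real.norm_eq_abs, abs_of_pos ht.1]
    have h7 : ⟪f' (x + t • d) - f' x, d⟫ ≤ ‖f' (x + t • d) - f' x‖ * ‖d‖ :=
      real_inner_le_norm _ _
    rw [inner_sub_left] at h7
    have h8 : ‖f' (x + t • d) - f' x‖ * ‖d‖ ≤ L * (t * ‖d‖) * ‖d‖ :=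
      mul_le_mul_of_nonneg_right (h6 ▸ h5) (norm_nonneg _)
    nlinarith [norm_nonneg d]
  have h9 : χ 1 ≤ χ 0 := hmono (Set.mem_Icc.2 ⟨le_refl 0, zero_le_one⟩)
      (Set.mem_Icc.2 ⟨zero_le_one, le_refl 1⟩) zero_le_one
  simp only [hχdef, one_smul, zero_smul, add_zero, one_pow, mul_one, zero_pow, mul_zero,
    sub_zero, zero_mul] at h9
  rw [hd] at h9
  rw [add_sub_cancel] at h9
  linarith

/-- Co-coercivity-type inequality for a convex function with quadratic upper bound. -/
lemma aux_coco {n : ℕ} (L' : ℝ) (hL' : 0 < L') (g : EuclideanSpace ℝ (Fin n) → ℝ)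
    (g' : EuclideanSpace ℝ (Fin n) → EuclideanSpace ℝ (Fin n))
    (hcvx : ∀ x y, g x + ⟪g' x, y - x⟫ ≤ g y)
    (hdes : ∀ x y, g y ≤ g x + ⟪g' x, y - x⟫ + L' / 2 * ‖y - x‖ ^ 2) :
    ∀ x y, g x + ⟪g' x, y - x⟫ + 1 / (2 * L') * ‖g' y - g' x‖ ^ 2 ≤ g y := by
  intro x y
  set w := g' y - g' x with hw
  set z := y - (1 / L') • w with hz
  have h1 := hcvx x z
  have h2 := hdes y z
  have e1 : z - y = -((1 / L') • w) := by rw [hz]; abel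
  have e2 : ⟪g' y, z - y⟫ = -(1 / L') * ⟪g' y, w⟫ := by
    rw [e1, inner_neg_right, real_inner_smul_right]; ring
  have e3 : ‖z - y‖ ^ 2 = (1 / L') ^ 2 * ‖w‖ ^ 2 := by
    rw [e1, norm_neg, norm_smul, mul_pow, Real.norm_eq_abs, sq_abs]
  have e4 : ⟪g' x, z - x⟫ = ⟪g' x, y - x⟫ - (1 / L') * ⟪g' x, w⟫ := by
    have : z - x = (y - x) - (1 / L') • w := by rw [hz]; abel
    rw [this, inner_sub_right, real_inner_smul_right]
  have e5 : ⟪g' y, w⟫ - ⟪g' x, w⟫ = ‖w‖ ^ 2 := by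
    rw [← inner_sub_left, ← hw, real_inner_self_eq_norm_sq]
  rw [e2, e3] at h2
  rw [e4] at h1
  have hL'ne : L' ≠ 0 := ne_of_gt hL'
  have key : (1 / L') * ⟪g' x, w⟫ - (1 / L') * ⟪g' y, w⟫ + L' / 2 * ((1 / L') ^ 2 * ‖w‖ ^ 2)
      = -(1 / (2 * L')) * ‖w‖ ^ 2 := by
    have : ⟪g' x, w⟫ = ⟪g' y, w⟫ - ‖w‖ ^ 2 := by linarith [e5]
    rw [this]; field_simp; ring
  linarith [h1, h2, key.symm.le]

set_option maxHeartbeats 800000 in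
/-- Key pairwise inequality. -/
lemma aux_pair {n : ℕ} (m L : ℝ) (hlt : m < L)
    (f : EuclideanSpace ℝ (Fin n) → ℝ)
    (f' : EuclideanSpace ℝ (Fin n) → EuclideanSpace ℝ (Fin n))
    (hdiff : ∀ x, HasGradientAt f (f' x) x)
    (hsc : ∀ x y, f y ≥ f x + ⟪f' x, y - x⟫ + (m / 2) * ‖y - x‖ ^ 2)
    (hlip : ∀ x y, ‖f' y - f' x‖ ≤ L * ‖y - x‖) :
    ∀ a b : EuclideanSpace ℝ (Fin n),
      ((L - m) * ((f a - m / 2 * ‖a‖ ^ 2) - f 0) - ‖f' a - m • a‖ ^ 2 / 2)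
        - ((L - m) * ((f b - m / 2 * ‖b‖ ^ 2) - f 0) - ‖f' b - m • b‖ ^ 2 / 2)
      ≤ ⟪(f' b - L • b) - (f' a - L • a), f' a - m • a⟫ := by
  set L' : ℝ := L - m with hL'def
  have hL' : 0 < L' := sub_pos.2 hlt
  set G : EuclideanSpace ℝ (Fin n) → ℝ := fun z => f z - m / 2 * ‖z‖ ^ 2 with hGdef
  set g' : EuclideanSpace ℝ (Fin n) → EuclideanSpace ℝ (Fin n) := fun z => f' z - m • z
    with hg'def
  have expand : ∀ x y : EuclideanSpace ℝ (Fin n),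
      ⟪g' x, y - x⟫ = ⟪f' x, y - x⟫ - m * ⟪x, y⟫ + m * ‖x‖ ^ 2 := by
    intro x y
    rw [hg'def]
    simp only [inner_sub_left, inner_sub_right, real_inner_smul_left,
      real_inner_self_eq_norm_sq]
    ring
  have normexp : ∀ x y : EuclideanSpace ℝ (Fin n),
      ‖y - x‖ ^ 2 = ‖y‖ ^ 2 - 2 * ⟪x, y⟫ + ‖x‖ ^ 2 := by
    intro x y
    rw [norm_sub_sq_real, real_inner_comm]
  have hGc : ∀ x y, G x + ⟪g' x, y - x⟫ ≤ G y := by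
    intro x y
    have h1 := hsc x y
    rw [expand, hGdef]
    simp only
    rw [normexp x y] at h1
    linarith
  have hGd : ∀ x y, G y ≤ G x + ⟪g' x, y - x⟫ + L' / 2 * ‖y - x‖ ^ 2 := by
    intro x y
    have h1 := aux_descent L f f' hdiff hlip x y
    rw [expand, hGdef, hL'def]
    simp only
    rw [normexp x y] at h1 ⊢
    linarith
  have hcc := aux_coco L' hL' G g' hGc hGd
  intro a b
  set p := g' a with hp
  set r := g' b with hr
  have hqb : f' b - L • b = r - L' • b := by
    rw [hr, hg'def, hL'def]; simp only; rw [sub_smul]; abel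
  have hqa : f' a - L • a = p - L' • a := by
    rw [hp, hg'def, hL'def]; simp only; rw [sub_smul]; abel
  have hpa : f' a - m • a = p := rfl
  rw [hqb, hqa, hpa]
  have einner : ⟪(r - L' • b) - (p - L' • a), p⟫
      = ⟪r - p, p⟫ - L' * ⟪b - a, p⟫ := by
    have : (r - L' • b) - (p - L' • a) = (r - p) - L' • (b - a) := by
      rw [smul_sub]; abel
    rw [this, inner_sub_left, real_inner_smul_left]
  rw [einner]
  have hc := hcc a b
  have hc1 : ⟪p, b - a⟫ + 1 / (2 * L') * ‖r - p‖ ^ 2 ≤ G b - G a := by linarith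
  have hc2 := mul_le_mul_of_nonneg_left hc1 hL'.le
  have hhalf : L' * (1 / (2 * L') * ‖r - p‖ ^ 2) = ‖r - p‖ ^ 2 / 2 := by
    field_simp
  have hc3 : L' * ⟪p, b - a⟫ + ‖r - p‖ ^ 2 / 2 ≤ L' * (G b - G a) := by
    rw [mul_add] at hc2
    linarith
  have e1 : ‖r - p‖ ^ 2 = ‖r‖ ^ 2 - 2 * ⟪r, p⟫ + ‖p‖ ^ 2 := norm_sub_sq_real r p
  have e2 : ⟪r - p, p⟫ = ⟪r, p⟫ - ‖p‖ ^ 2 := by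
    rw [inner_sub_left, real_inner_self_eq_norm_sq]
  have e3 : ⟪b - a, p⟫ = ⟪p, b - a⟫ := real_inner_comm _ _
  have hGa : G a = f a - m / 2 * ‖a‖ ^ 2 := rfl
  have hGb : G b = f b - m / 2 * ‖b‖ ^ 2 := rfl
  have hG0 : G 0 = f 0 := by
    rw [hGdef]; simp
  have hBa : (L - m) * ((f a - m / 2 * ‖a‖ ^ 2) - f 0) = L' * (G a - G 0) := by
    rw [hGa, hG0, hL'def]
  have hBb : (L - m) * ((f b - m / 2 * ‖b‖ ^ 2) - f 0) = L' * (G b - G 0) := by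
    rw [hGb, hG0, hL'def]
  rw [hBa, hBb]
  have hpnorm : ‖f' a - m • a‖ = ‖p‖ := rfl
  have hrnorm : ‖f' b - m • b‖ = ‖r‖ := rfl
  rw [hpnorm, hrnorm]
  nlinarith [hc3, e1, e2, e3]

set_option maxHeartbeats 1000000 in
/-- The Zames–Falb (off-by-K) ρ-hard IQC (Lemma 3 of the paper), written explicitly:
the filter stores the past K values of q_k = u_k − Ly_k (with q_k = 0 for k < 0), and
with M = [[0,I],[I,0]] the product z_kᵀMz_k equals
2⟨Σ_{j=1}^{K} h_j q_{k−j} + Ly_k − u_k, u_k − my_k⟩. -/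
theorem stmt_4 {n : ℕ} (m L ρ : ℝ) (hm : 0 < m) (hmL : m ≤ L)
    (hρ₀ : 0 < ρ) (hρ₁ : ρ ≤ 1)
    (K : ℕ) (hK : 1 ≤ K) (h : ℕ → ℝ)
    (hh : ∀ j ∈ Finset.Icc 1 K, 0 ≤ h j ∧ h j ≤ 1)
    (hhsum : ∑ j ∈ Finset.Icc 1 K, (ρ ^ (2 * j))⁻¹ * h j ≤ 1)
    (f : EuclideanSpace ℝ (Fin n) → ℝ)
    (f' : EuclideanSpace ℝ (Fin n) → EuclideanSpace ℝ (Fin n))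
    (hdiff : ∀ x, HasGradientAt f (f' x) x)
    (hsc : ∀ x y, f y ≥ f x + ⟪f' x, y - x⟫ + (m / 2) * ‖y - x‖ ^ 2)
    (hlip : ∀ x y, ‖f' y - f' x‖ ≤ L * ‖y - x‖)
    (hmin : f' 0 = 0)
    (y u : ℕ → EuclideanSpace ℝ (Fin n))
    (hu : ∀ k, u k = f' (y k))
    (q : ℤ → EuclideanSpace ℝ (Fin n))
    (hq : ∀ k : ℕ, q (k : ℤ) = u k - L • y k)
    (hqneg : ∀ k : ℤ, k < 0 → q k = 0) :
    ∀ N : ℕ, 0 ≤ ∑ k ∈ Finset.range (N + 1),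
      (ρ ^ (2 * k))⁻¹ *
        (2 * ⟪(∑ j ∈ Finset.Icc 1 K, h j • q ((k : ℤ) - (j : ℤ))) + L • y k - u k,
              u k - m • y k⟫) := by
  intro N
  rcases eq_or_lt_of_le hmL with hEq | hlt
  · -- degenerate case m = L : gradient is L • x, so u k - m • y k = 0
    have hL0 : 0 < L := lt_of_lt_of_le hm hmL
    have hgrad : ∀ z, f' z = L • z := by
      intro z
      have h1 := hsc 0 z
      have h2 := hsc z 0
      rw [hmin] at h1
      simp only [inner_zero_left, sub_zero, zero_sub, add_zero] at h1
      rw [zero_sub, inner_neg_right, norm_neg] at h2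
      have h3 := hlip 0 z
      rw [hmin, sub_zero, sub_zero] at h3
      have hinner : L * ‖z‖ ^ 2 ≤ ⟪f' z, z⟫ := by rw [← hEq]; nlinarith
      have hn2 : ‖f' z‖ ^ 2 ≤ (L * ‖z‖) ^ 2 := by
        nlinarith [norm_nonneg (f' z), norm_nonneg z]
      have hexp : ‖f' z - L • z‖ ^ 2
          = ‖f' z‖ ^ 2 - 2 * (L * ⟪f' z, z⟫) + (L * ‖z‖) ^ 2 := by
        rw [norm_sub_sq_real, real_inner_smul_right, norm_smul, Real.norm_eq_abs,
          abs_of_pos hL0]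
      have h4 : ‖f' z - L • z‖ = 0 := by
        nlinarith [norm_nonneg (f' z - L • z), sq_nonneg ‖f' z - L • z‖]
      exact sub_eq_zero.1 (norm_eq_zero.1 h4)
    have hz : ∀ k, u k - m • y k = 0 := by
      intro k
      rw [hu, hgrad, hEq, sub_self]
    apply Finset.sum_nonneg
    intro k _
    rw [hz k, inner_zero_right, mul_zero, mul_zero]
  · -- main case m < L
    have hpair := aux_pair m L hlt f f' hdiff hsc hlip
    set B : ℕ → ℝ := fun k =>
      (L - m) * ((f (y k) - m / 2 * ‖y k‖ ^ 2) - f 0) - ‖u k - m • y k‖ ^ 2 / 2 with hBdef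
    set βZ : ℤ → ℝ := fun i => if 0 ≤ i then B i.toNat else 0 with hβZdef
    have hβZn : ∀ i : ℕ, βZ (i : ℤ) = B i := by
      intro i
      simp [hβZdef]
    have hβZneg : ∀ i : ℤ, i < 0 → βZ i = 0 := by
      intro i hi
      simp [hβZdef, not_le.2 hi]
    -- the pair inequality at a = y k, b = y i (in u-form)
    have hpairN : ∀ k i : ℕ, B k - B i
        ≤ ⟪(u i - L • y i) - (u k - L • y k), u k - m • y k⟫ := by
      intro k i
      have := hpair (y k) (y i)
      rw [← hu k, ← hu i] at this
      exact this
    -- the pair inequality at b = 0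
    have hpair0 : ∀ k : ℕ, B k ≤ ⟪(0 : EuclideanSpace ℝ (Fin n)) - (u k - L • y k),
        u k - m • y k⟫ := by
      intro k
      have this := hpair (y k) 0
      rw [← hu k, hmin] at this
      have hv1 : (0 : EuclideanSpace ℝ (Fin n)) - m • (0 : EuclideanSpace ℝ (Fin n)) = 0 := by
        simp
      have hv2 : (0 : EuclideanSpace ℝ (Fin n)) - L • (0 : EuclideanSpace ℝ (Fin n)) = 0 := by
        simp
      rw [hv1, hv2] at this
      have hb : (L - m) * ((f 0 - m / 2 * ‖(0 : EuclideanSpace ℝ (Fin n))‖ ^ 2) - f 0)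
          - ‖(0 : EuclideanSpace ℝ (Fin n))‖ ^ 2 / 2 = 0 := by simp
      have hBk : B k = (L - m) * ((f (y k) - m / 2 * ‖y k‖ ^ 2) - f 0)
          - ‖u k - m • y k‖ ^ 2 / 2 := by rw [hBdef]
      rw [hBk]
      linarith [this, hb]
    -- B is nonnegative
    have hB0 : ∀ k : ℕ, 0 ≤ B k := by
      intro k
      have this := hpair 0 (y k)
      rw [← hu k, hmin] at this
      have hv1 : (0 : EuclideanSpace ℝ (Fin n)) - m • (0 : EuclideanSpace ℝ (Fin n)) = 0 := by
        simp
      rw [hv1, inner_zero_right] at this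
      have hb : (L - m) * ((f 0 - m / 2 * ‖(0 : EuclideanSpace ℝ (Fin n))‖ ^ 2) - f 0)
          - ‖(0 : EuclideanSpace ℝ (Fin n))‖ ^ 2 / 2 = 0 := by simp
      have hBk : B k = (L - m) * ((f (y k) - m / 2 * ‖y k‖ ^ 2) - f 0)
          - ‖u k - m • y k‖ ^ 2 / 2 := by rw [hBdef]
      have h2 : 0 - B k ≤ 0 := by rw [hBk]; linarith [this, hb]
      linarith
    have hKeyZ : ∀ (k : ℕ) (i : ℤ), B k - βZ i
        ≤ ⟪q i, u k - m • y k⟫ - ⟪u k - L • y k, u k - m • y k⟫ := by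
      intro k i
      rcases lt_or_ge i 0 with hi | hi
      · rw [hqneg i hi, hβZneg i hi, inner_zero_left]
        have := hpair0 k
        rw [zero_sub, inner_neg_left] at this
        linarith
      · obtain ⟨i', rfl⟩ : ∃ i' : ℕ, i = (i' : ℤ) := ⟨i.toNat, (Int.toNat_of_nonneg hi).symm⟩
        rw [hq i', hβZn i']
        have := hpairN k i'
        rw [inner_sub_left] at this
        linarith
    -- sum of filter weights is at most 1
    have hHnn : 0 ≤ ∑ j ∈ Finset.Icc 1 K, h j :=
      Finset.sum_nonneg fun j hj => (hh j hj).1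
    have hH1 : ∑ j ∈ Finset.Icc 1 K, h j ≤ 1 := by
      refine le_trans (Finset.sum_le_sum ?_) hhsum
      intro j hj
      have hp : 0 < ρ ^ (2 * j) := pow_pos hρ₀ _
      have h1 : ρ ^ (2 * j) ≤ 1 := pow_le_one₀ hρ₀.le hρ₁
      have h2 : (1:ℝ) ≤ (ρ ^ (2 * j))⁻¹ := (one_le_inv₀ hp).2 h1
      nlinarith [(hh j hj).1]
    -- per-step inequality
    have hTk : ∀ k : ℕ,
        2 * (B k - ∑ j ∈ Finset.Icc 1 K, h j * βZ ((k : ℤ) - (j : ℤ)))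
        ≤ 2 * ⟪(∑ j ∈ Finset.Icc 1 K, h j • q ((k : ℤ) - (j : ℤ))) + L • y k - u k,
              u k - m • y k⟫ := by
      intro k
      have hvec : (∑ j ∈ Finset.Icc 1 K, h j • q ((k : ℤ) - (j : ℤ))) + L • y k - u k
          = (∑ j ∈ Finset.Icc 1 K, h j • q ((k : ℤ) - (j : ℤ))) - (u k - L • y k) := by
        abel
      rw [hvec, inner_sub_left, sum_inner]
      simp only [real_inner_smul_left]
      set A : ℝ := ⟪u k - L • y k, u k - m • y k⟫ with hAdef
      have hA : B k ≤ -A := by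
        have := hKeyZ k (-1)
        rw [hqneg (-1) (by norm_num), hβZneg (-1) (by norm_num), inner_zero_left] at this
        linarith
      have hsum1 : ∑ j ∈ Finset.Icc 1 K, h j * (B k + A - βZ ((k : ℤ) - (j : ℤ)))
          ≤ ∑ j ∈ Finset.Icc 1 K, h j * ⟪q ((k : ℤ) - (j : ℤ)), u k - m • y k⟫ := by
        refine Finset.sum_le_sum ?_
        intro j hj
        refine mul_le_mul_of_nonneg_left ?_ (hh j hj).1
        have := hKeyZ k ((k : ℤ) - (j : ℤ))
        linarith
      have hsum2 : ∑ j ∈ Finset.Icc 1 K, h j * (B k + A - βZ ((k : ℤ) - (j : ℤ)))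
          = (∑ j ∈ Finset.Icc 1 K, h j) * (B k + A)
            - ∑ j ∈ Finset.Icc 1 K, h j * βZ ((k : ℤ) - (j : ℤ)) := by
        rw [Finset.sum_mul]
        rw [← Finset.sum_sub_distrib]
        refine Finset.sum_congr rfl ?_
        intro j _
        ring
      rw [hsum2] at hsum1
      have h5 : 0 ≤ (1 - ∑ j ∈ Finset.Icc 1 K, h j) * (-B k - A) := by
        apply mul_nonneg
        · linarith
        · linarith
      nlinarith [hsum1, h5]
    -- weights
    set w : ℕ → ℝ := fun k => (ρ ^ (2 * k))⁻¹ with hwdef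
    have hw : ∀ k, 0 ≤ w k := fun k => inv_nonneg.2 (pow_nonneg hρ₀.le _)
    set S : ℝ := ∑ k ∈ Finset.range (N + 1), w k * B k with hSdef
    have hS : 0 ≤ S := Finset.sum_nonneg fun k _ => mul_nonneg (hw k) (hB0 k)
    -- shifted sums
    have hshift : ∀ j : ℕ, ∑ k ∈ Finset.range (N + 1), w k * βZ ((k : ℤ) - (j : ℤ))
        ≤ (ρ ^ (2 * j))⁻¹ * S := by
      intro j
      have hterm : ∀ k ∈ Finset.range (N + 1), w k * βZ ((k : ℤ) - (j : ℤ))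
          = if j ≤ k then (ρ ^ (2 * j))⁻¹ * (w (k - j) * B (k - j)) else 0 := by
        intro k _
        by_cases hjk : j ≤ k
        · rw [if_pos hjk, ← Int.natCast_sub hjk, hβZn (k - j)]
          have hsplit : w k = (ρ ^ (2 * j))⁻¹ * w (k - j) := by
            rw [hwdef]
            simp only
            rw [← mul_inv, ← pow_add]
            congr 2
            omega
          rw [hsplit]
          ring
        · rw [if_neg hjk]
          have hneg : ((k : ℤ) - (j : ℤ)) < 0 := by omega
          rw [hβZneg _ hneg, mul_zero]
      rw [Finset.sum_congr rfl hterm, ← Finset.sum_filter]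
      have hfe : (Finset.range (N + 1)).filter (fun k => j ≤ k) = Finset.Ico j (N + 1) := by
        ext k
        simp [Finset.mem_filter, Finset.mem_range, Finset.mem_Ico, and_comm]
      rw [hfe, Finset.sum_Ico_eq_sum_range]
      simp only [Nat.add_sub_cancel_left]
      rw [← Finset.mul_sum]
      refine mul_le_mul_of_nonneg_left ?_ (inv_nonneg.2 (pow_nonneg hρ₀.le _))
      refine Finset.sum_le_sum_of_subset_of_nonneg (Finset.range_subset_range.2 (by omega)) ?_
      intro i _ _
      exact mul_nonneg (hw i) (hB0 i)
    -- assemble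
    set D : ℕ → ℝ := fun k => ∑ j ∈ Finset.Icc 1 K, h j * βZ ((k : ℤ) - (j : ℤ)) with hDdef
    have step1 : ∑ k ∈ Finset.range (N + 1), w k * (2 * (B k - D k))
        ≤ ∑ k ∈ Finset.range (N + 1),
          (ρ ^ (2 * k))⁻¹ *
            (2 * ⟪(∑ j ∈ Finset.Icc 1 K, h j • q ((k : ℤ) - (j : ℤ))) + L • y k - u k,
                  u k - m • y k⟫) := by
      refine Finset.sum_le_sum ?_
      intro k _
      exact mul_le_mul_of_nonneg_left (hTk k) (hw k)
    have step2 : ∑ k ∈ Finset.range (N + 1), w k * (2 * (B k - D k))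
        = 2 * S - 2 * ∑ k ∈ Finset.range (N + 1), w k * D k := by
      have e : ∑ k ∈ Finset.range (N + 1), w k * (2 * (B k - D k))
          = 2 * ((∑ k ∈ Finset.range (N + 1), w k * B k)
              - ∑ k ∈ Finset.range (N + 1), w k * D k) := by
        rw [← Finset.sum_sub_distrib, Finset.mul_sum]
        exact Finset.sum_congr rfl fun k _ => by ring
      rw [e, hSdef]
      ring
    have step3 : ∑ k ∈ Finset.range (N + 1), w k * D k ≤ S := by
      have e1 : ∑ k ∈ Finset.range (N + 1), w k * D k
          = ∑ j ∈ Finset.Icc 1 K, h j * ∑ k ∈ Finset.range (N + 1),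
              w k * βZ ((k : ℤ) - (j : ℤ)) := by
        simp only [hDdef, Finset.mul_sum]
        rw [Finset.sum_comm]
        refine Finset.sum_congr rfl ?_
        intro j _
        exact Finset.sum_congr rfl fun k _ => by ring
      rw [e1]
      have e2 : ∑ j ∈ Finset.Icc 1 K, h j * ∑ k ∈ Finset.range (N + 1),
            w k * βZ ((k : ℤ) - (j : ℤ))
          ≤ ∑ j ∈ Finset.Icc 1 K, h j * ((ρ ^ (2 * j))⁻¹ * S) := by
        refine Finset.sum_le_sum ?_
        intro j hj
        exact mul_le_mul_of_nonneg_left (hshift j) (hh j hj).1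
      have e3 : ∑ j ∈ Finset.Icc 1 K, h j * ((ρ ^ (2 * j))⁻¹ * S)
          = (∑ j ∈ Finset.Icc 1 K, (ρ ^ (2 * j))⁻¹ * h j) * S := by
        rw [Finset.sum_mul]
        refine Finset.sum_congr rfl ?_
        intro j _
        ring
      have e4 : (∑ j ∈ Finset.Icc 1 K, (ρ ^ (2 * j))⁻¹ * h j) * S ≤ 1 * S :=
        mul_le_mul_of_nonneg_right hhsum hS
      linarith [e2, e3.le, e3.ge, e4]
    linarith [step1, step2.ge, step2.le, step3, hS]
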